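/- Monotone likelihood ratio of the number-measurement distribution in the radius: for fixed N > 0 and 0 ≤ r < r', the ratio P_{r'}(k)/P_r(k) is strictly increasing in k ∈ ℕ, where P_r(k) = (1/(N+1))(N/(N+1))^k e^{−r²/(N+1)} L_k(−r²/(N(N+1))). -/
import Mathlib

/-- The k-th Laguerre polynomial. -/
noncomputable def laguerre (k : ℕ) (x : ℝ) : ℝ :=
  ∑ j ∈ Finset.range (k + 1), (k.choose j : ℝ) * (-x) ^ j / (j.factorial : ℝ)

/-- Number-measurement outcome distribution on the quantum Gaussian state with
|mean| = r and number parameter N. -/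
noncomputable def Pr (N r : ℝ) (k : ℕ) : ℝ :=
  (1 / (N + 1)) * (N / (N + 1)) ^ k * Real.exp (-r ^ 2 / (N + 1)) *
    laguerre k (-r ^ 2 / (N * (N + 1)))

open Finset

lemma laguerre_neg (k : ℕ) (x : ℝ) :
    laguerre k (-x) = ∑ j ∈ range (k + 1), ((k.choose j : ℝ) / j.factorial) * x ^ j := by
  unfold laguerre
  refine Finset.sum_congr rfl fun j _ => by rw [neg_neg]; ring

lemma laguerre_neg' (k : ℕ) (x : ℝ) (n : ℕ) (hn : k < n) :
    laguerre k (-x) = ∑ j ∈ range n, ((k.choose j : ℝ) / j.factorial) * x ^ j := by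
  rw [laguerre_neg]
  apply Finset.sum_subset (Finset.range_subset_range.2 hn)
  intro j _ hj
  rw [Finset.mem_range, not_lt] at hj
  have : k.choose j = 0 := Nat.choose_eq_zero_of_lt (by omega)
  simp [this]

lemma laguerre_neg_pos (k : ℕ) {x : ℝ} (hx : 0 ≤ x) : 0 < laguerre k (-x) := by
  rw [laguerre_neg]
  apply Finset.sum_pos'
  · intro j _
    exact mul_nonneg (div_nonneg (Nat.cast_nonneg _) (Nat.cast_nonneg _)) (pow_nonneg hx j)
  · exact ⟨0, Finset.mem_range.2 (Nat.succ_pos k), by simp⟩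

lemma choose_cross {k i j : ℕ} (h : j ≤ i) :
    (k + 1).choose j * k.choose i ≤ (k + 1).choose i * k.choose j := by
  rcases le_or_gt i k with hik | hik
  · have ha : 0 < k + 1 - i := by omega
    have hb : 0 < k + 1 - j := by omega
    have hi := Nat.choose_mul_succ_eq k i
    have hj := Nat.choose_mul_succ_eq k j
    have hab : k + 1 - i ≤ k + 1 - j := by omega
    apply Nat.le_of_mul_le_mul_right _ (Nat.mul_pos ha hb)
    calc (k + 1).choose j * k.choose i * ((k + 1 - i) * (k + 1 - j))
        = ((k + 1).choose j * (k + 1 - j)) * (k.choose i * (k + 1 - i)) := by ring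
      _ = (k.choose j * (k + 1)) * (k.choose i * (k + 1 - i)) := by rw [← hj]
      _ ≤ (k.choose j * (k + 1)) * (k.choose i * (k + 1 - j)) := by
          exact Nat.mul_le_mul_left _ (Nat.mul_le_mul_left _ hab)
      _ = ((k + 1).choose i * (k + 1 - i)) * (k.choose j * (k + 1 - j)) := by
          rw [← hi]; ring
      _ = (k + 1).choose i * k.choose j * ((k + 1 - i) * (k + 1 - j)) := by ring
  · have : k.choose i = 0 := Nat.choose_eq_zero_of_lt hik
    simp [this]

lemma pow_cross {x x' : ℝ} (hx : 0 ≤ x) (h : x ≤ x') {i j : ℕ} (hji : j ≤ i) :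
    0 ≤ x' ^ i * x ^ j - x' ^ j * x ^ i := by
  obtain ⟨d, rfl⟩ := Nat.exists_eq_add_of_le hji
  have key : x' ^ (j + d) * x ^ j - x' ^ j * x ^ (j + d)
      = x' ^ j * x ^ j * (x' ^ d - x ^ d) := by
    rw [pow_add, pow_add]; ring
  rw [key]
  have hx' : 0 ≤ x' := hx.trans h
  exact mul_nonneg (mul_nonneg (pow_nonneg hx' j) (pow_nonneg hx j))
    (sub_nonneg.2 (pow_le_pow_left₀ hx h d))

lemma coeff_cross (k : ℕ) {i j : ℕ} (hji : j ≤ i) :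
    0 ≤ ((k + 1).choose i : ℝ) / i.factorial * ((k.choose j : ℝ) / j.factorial)
      - ((k + 1).choose j : ℝ) / j.factorial * ((k.choose i : ℝ) / i.factorial) := by
  have h := choose_cross (k := k) hji
  have h' : ((k + 1).choose j * k.choose i : ℝ) ≤ ((k + 1).choose i * k.choose j : ℝ) := by
    exact_mod_cast h
  have hi : (0:ℝ) < i.factorial := by exact_mod_cast i.factorial_pos
  have hj : (0:ℝ) < j.factorial := by exact_mod_cast j.factorial_pos
  rw [div_mul_div_comm, div_mul_div_comm, mul_comm (j.factorial:ℝ) (i.factorial:ℝ), ← sub_div]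
  apply div_nonneg _ (by positivity)
  push_cast
  linarith

lemma T_nonneg (k : ℕ) {x x' : ℝ} (hx : 0 ≤ x) (h : x ≤ x') (i j : ℕ) :
    0 ≤ (((k + 1).choose i : ℝ) / i.factorial * ((k.choose j : ℝ) / j.factorial)
        - ((k + 1).choose j : ℝ) / j.factorial * ((k.choose i : ℝ) / i.factorial))
      * (x' ^ i * x ^ j - x' ^ j * x ^ i) := by
  rcases le_total j i with hji | hij
  · exact mul_nonneg (coeff_cross k hji) (pow_cross hx h hji)
  · have e : (((k + 1).choose i : ℝ) / i.factorial * ((k.choose j : ℝ) / j.factorial)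
        - ((k + 1).choose j : ℝ) / j.factorial * ((k.choose i : ℝ) / i.factorial))
      * (x' ^ i * x ^ j - x' ^ j * x ^ i)
      = (((k + 1).choose j : ℝ) / j.factorial * ((k.choose i : ℝ) / i.factorial)
        - ((k + 1).choose i : ℝ) / i.factorial * ((k.choose j : ℝ) / j.factorial))
      * (x' ^ j * x ^ i - x' ^ i * x ^ j) := by ring
    rw [e]
    exact mul_nonneg (coeff_cross k hij) (pow_cross hx h hij)

lemma laguerre_cross (k : ℕ) {x x' : ℝ} (hx : 0 ≤ x) (h : x < x') :
    laguerre k (-x') * laguerre (k + 1) (-x)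
      < laguerre (k + 1) (-x') * laguerre k (-x) := by
  set n := k + 2 with hn
  set u : ℕ → ℝ := fun i => ((k + 1).choose i : ℝ) / i.factorial with hu
  set v : ℕ → ℝ := fun i => ((k).choose i : ℝ) / i.factorial with hv
  have hg1 : ∀ y : ℝ, laguerre (k + 1) (-y) = ∑ i ∈ range n, u i * y ^ i := fun y =>
    laguerre_neg' (k + 1) y n (by omega)
  have hg0 : ∀ y : ℝ, laguerre k (-y) = ∑ i ∈ range n, v i * y ^ i := fun y =>
    laguerre_neg' k y n (by omega)
  rw [hg1, hg1, hg0, hg0, ← sub_pos]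
  have hS : ∑ i ∈ range n, ∑ j ∈ range n,
      (u i * v j - u j * v i) * (x' ^ i * x ^ j - x' ^ j * x ^ i)
      = 2 * ((∑ i ∈ range n, u i * x' ^ i) * (∑ j ∈ range n, v j * x ^ j)
          - (∑ i ∈ range n, v i * x' ^ i) * (∑ j ∈ range n, u j * x ^ j)) := by
    have e1 : ∑ i ∈ range n, ∑ j ∈ range n,
        (u i * v j - u j * v i) * (x' ^ i * x ^ j - x' ^ j * x ^ i)
        = ∑ i ∈ range n, ∑ j ∈ range n,
          ((u i * x' ^ i) * (v j * x ^ j) + (v i * x ^ i) * (u j * x' ^ j)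
            - (u i * x ^ i) * (v j * x' ^ j) - (v i * x' ^ i) * (u j * x ^ j)) := by
      refine Finset.sum_congr rfl fun i _ => Finset.sum_congr rfl fun j _ => by ring
    rw [e1]
    simp only [Finset.sum_sub_distrib, Finset.sum_add_distrib,
      ← Finset.sum_mul_sum]
    ring
  have hpt : ∀ i ∈ range n, ∀ j ∈ range n,
      0 ≤ (u i * v j - u j * v i) * (x' ^ i * x ^ j - x' ^ j * x ^ i) := by
    intro i _ j _
    exact T_nonneg k hx h.le i j
  have hSpos : 0 < ∑ i ∈ range n, ∑ j ∈ range n,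
      (u i * v j - u j * v i) * (x' ^ i * x ^ j - x' ^ j * x ^ i) := by
    have h10 : 0 < (u 1 * v 0 - u 0 * v 1) * (x' ^ 1 * x ^ 0 - x' ^ 0 * x ^ 1) := by
      have : u 1 * v 0 - u 0 * v 1 = 1 := by
        simp [hu, hv, Nat.choose_one_right, Nat.factorial]
      rw [this]
      simpa using sub_pos.2 h
    apply Finset.sum_pos' (fun i hi => Finset.sum_nonneg (fun j hj => hpt i hi j hj))
    refine ⟨1, Finset.mem_range.2 (by omega), ?_⟩
    apply Finset.sum_pos' (fun j hj => hpt 1 (Finset.mem_range.2 (by omega)) j hj)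
    exact ⟨0, Finset.mem_range.2 (by omega), h10⟩
  rw [hS] at hSpos
  linarith

lemma Pr_pos (N r : ℝ) (hN : 0 < N) (k : ℕ) : 0 < Pr N r k := by
  unfold Pr
  have h1 : (0:ℝ) < N + 1 := by linarith
  have harg : -r ^ 2 / (N * (N + 1)) = -(r ^ 2 / (N * (N + 1))) := by rw [neg_div]
  rw [harg]
  have hL := laguerre_neg_pos k (x := r ^ 2 / (N * (N + 1)))
    (by positivity)
  positivity

theorem Pr_monotone_likelihood_ratio (N : ℝ) (hN : 0 < N) (r r' : ℝ)
    (hr : 0 ≤ r) (hrr' : r < r') :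
    StrictMono (fun k : ℕ => Pr N r' k / Pr N r k) := by
  apply strictMono_nat_of_lt_succ
  intro k
  have h1 : (0:ℝ) < N + 1 := by linarith
  have hc : (0:ℝ) < N * (N + 1) := by positivity
  set x : ℝ := r ^ 2 / (N * (N + 1)) with hxdef
  set x' : ℝ := r' ^ 2 / (N * (N + 1)) with hx'def
  have hx : 0 ≤ x := by positivity
  have hxx' : x < x' := by
    rw [hxdef, hx'def, div_lt_div_iff₀ hc hc]
    exact mul_lt_mul_of_pos_right (pow_lt_pow_left₀ hrr' hr (by norm_num)) hc
  have harg : -r ^ 2 / (N * (N + 1)) = -x := by rw [hxdef, neg_div]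
  have harg' : -r' ^ 2 / (N * (N + 1)) = -x' := by rw [hx'def, neg_div]
  have cr := laguerre_cross k hx hxx'
  rw [div_lt_div_iff₀ (Pr_pos N r hN k) (Pr_pos N r hN (k + 1))]
  simp only [Pr, harg, harg']
  set E := Real.exp (-r ^ 2 / (N + 1))
  set E' := Real.exp (-r' ^ 2 / (N + 1))
  have hE : 0 < E := Real.exp_pos _
  have hE' : 0 < E' := Real.exp_pos _
  have hm : (0:ℝ) < N / (N + 1) := by positivity
  set K : ℝ := (1 / (N + 1)) * (1 / (N + 1)) * ((N / (N + 1)) ^ k * (N / (N + 1)) ^ k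
    * (N / (N + 1))) * E * E' with hK
  have hKpos : 0 < K := by positivity
  calc (1 / (N + 1)) * (N / (N + 1)) ^ k * E' * laguerre k (-x')
        * ((1 / (N + 1)) * (N / (N + 1)) ^ (k + 1) * E * laguerre (k + 1) (-x))
      = K * (laguerre k (-x') * laguerre (k + 1) (-x)) := by
        rw [hK]; rw [pow_succ]; ring
    _ < K * (laguerre (k + 1) (-x') * laguerre k (-x)) :=
        mul_lt_mul_of_pos_left cr hKpos
    _ = (1 / (N + 1)) * (N / (N + 1)) ^ (k + 1) * E' * laguerre (k + 1) (-x')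
        * ((1 / (N + 1)) * (N / (N + 1)) ^ k * E * laguerre k (-x)) := by
        rw [hK]; rw [pow_succ]; ring
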